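/- Let n ≥ 4, 1 ≤ u ≤ n and m ≥ 1. Let a = (a_1,…,a_n) ∈ R_n^n with a_u = 0 be an R_n-linear combination of the row vectors σ_u²μ_{u,m}(σ_i e_j − σ_j e_i) for i,j ≠ u with i ≠ j, and σ_uσ_jμ_{i,m}(σ_i e_j − σ_j e_i) for i,j ≠ u with i ≠ j, where e_j denotes the j-th standard basis row vector. Then the matrix I_n + Σ_{v≠u} a_v E_{u,v}, which equals the identity except in the u-th row, lies in IA_n^m. -/

import Mathlib

noncomputable section

open Matrix

/-- The Laurent polynomial ring `ℤ[x₁^{±1},…,x_n^{±1}]`, realized as the group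
algebra of the free abelian group `ℤⁿ` over `ℤ`. -/
abbrev LaurentR (n : ℕ) : Type := AddMonoidAlgebra ℤ (Fin n →₀ ℤ)

/-- `x_i` as a unit of `LaurentR n`. -/
def Xu {n : ℕ} (i : Fin n) : (LaurentR n)ˣ where
  val := AddMonoidAlgebra.single (Finsupp.single i 1) 1
  inv := AddMonoidAlgebra.single (-Finsupp.single i 1) 1
  val_inv := by
    rw [AddMonoidAlgebra.single_mul_single]
    simp [AddMonoidAlgebra.one_def]
  inv_val := by
    rw [AddMonoidAlgebra.single_mul_single]
    simp [AddMonoidAlgebra.one_def]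

/-- `x_i` as an element of `LaurentR n`. -/
def Xv {n : ℕ} (i : Fin n) : LaurentR n := (Xu i : LaurentR n)

/-- `σ_i = x_i - 1`. -/
def sg {n : ℕ} (i : Fin n) : LaurentR n := Xv i - 1

/-- The vector `σ⃗`. -/
def sgVec (n : ℕ) : Fin n → LaurentR n := fun i => sg i

/-- `μ_{r,m} = 1 + x_r + ⋯ + x_r^{m-1}`. -/
def muv {n : ℕ} (r : Fin n) (m : ℕ) : LaurentR n := ∑ i ∈ Finset.range m, Xv r ^ i

/-- The augmentation ideal `𝔄_n = Σ σ_i R_n`. -/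
def augI (n : ℕ) : Ideal (LaurentR n) := Ideal.span (Set.range (sgVec n))

/-- The ideal `m·R_n`. -/
def OI (n m : ℕ) : Ideal (LaurentR n) := Ideal.span {(m : LaurentR n)}

/-- The ideal `H_{n,m} = Σ_r (x_r^m − 1)R_n + mR_n`. -/
def HI (n m : ℕ) : Ideal (LaurentR n) :=
  Ideal.span (Set.range (fun r : Fin n => Xv r ^ m - 1) ∪ {(m : LaurentR n)})

/-- `IA_n = {A ∈ GL_n(R_n) : A·σ⃗ = σ⃗}` as a subgroup of `GL_n(R_n)`. -/
def IAn (n : ℕ) : Subgroup (GL (Fin n) (LaurentR n)) where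
  carrier := {g | (g : Matrix (Fin n) (Fin n) (LaurentR n)) *ᵥ sgVec n = sgVec n}
  one_mem' := by simp
  mul_mem' := by
    intro a b ha hb
    simp only [Set.mem_setOf_eq, Units.val_mul] at *
    rw [← Matrix.mulVec_mulVec, hb, ha]
  inv_mem' := by
    intro a ha
    simp only [Set.mem_setOf_eq] at *
    have h : ((a⁻¹ : GL (Fin n) (LaurentR n)) : Matrix (Fin n) (Fin n) (LaurentR n)) *ᵥ
        ((a : Matrix (Fin n) (Fin n) (LaurentR n)) *ᵥ sgVec n) = sgVec n := by
      rw [Matrix.mulVec_mulVec, ← Units.val_mul, inv_mul_cancel, Units.val_one,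
        Matrix.one_mulVec]
    rw [ha] at h
    exact h

/-- The underlying matrix of an element of `IA_n`. -/
def matOf {n : ℕ} (g : IAn n) : Matrix (Fin n) (Fin n) (LaurentR n) :=
  ((g : GL (Fin n) (LaurentR n)) : Matrix (Fin n) (Fin n) (LaurentR n))

/-- The principal congruence subgroup `IG_{n,m}` (as a subset of `IA_n`). -/
def IGnm (n m : ℕ) : Set (IAn n) := {g | ∀ k l, (matOf g - 1) k l ∈ HI n m}

/-- `IA_n^m`: the subgroup of `IA_n` generated by all `m`-th powers. -/
def IApow (n m : ℕ) : Subgroup (IAn n) := Subgroup.closure (Set.range fun g : IAn n => g ^ m)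


/-- `ISL_{n−1,i}(H)` for `n = k+1`: elements `I + A` of `IA_n` whose `i`-th row of `A`
vanishes, all entries of the minor `A_{i,i}` lie in `σ_iR_n ∩ H`, and
`det(I_{n−1} + A_{i,i}) = 1`. -/
def ISL {k : ℕ} (i : Fin (k + 1)) (H : Ideal (LaurentR (k + 1))) : Set (IAn (k + 1)) :=
  {g | (∀ l, (matOf g - 1) i l = 0) ∧
    (∀ a b : Fin k, (matOf g - 1) (i.succAbove a) (i.succAbove b) ∈
      Ideal.span {sg i} ⊓ H) ∧
    ((matOf g).submatrix i.succAbove i.succAbove).det = 1}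

/-- `IGL_{n−1,i}` for `n = k+1`: elements `I + A` of `IA_n` whose `i`-th row of `A`
vanishes and all entries of the minor `A_{i,i}` lie in `σ_iR_n`. -/
def IGLset {k : ℕ} (i : Fin (k + 1)) : Set (IAn (k + 1)) :=
  {g | (∀ l, (matOf g - 1) i l = 0) ∧
    ∀ a b : Fin k, (matOf g - 1) (i.succAbove a) (i.succAbove b) ∈ Ideal.span {sg i}}

/-- The elementary matrix `I_d + r·E_{a,b}` (`a ≠ b`) as an element of `GL_d(A)`. -/
def elemGL {d : ℕ} {A : Type*} [CommRing A] (a b : Fin d) (hab : a ≠ b) (r : A) :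
    GL (Fin d) A where
  val := 1 + Matrix.single a b r
  inv := 1 - Matrix.single a b r
  val_inv := by
    have h2 : Matrix.single a b r * Matrix.single a b r = 0 :=
      Matrix.single_mul_single_of_ne (c := r) (d := r) (h := hab.symm) ..
    rw [mul_sub, mul_one, add_mul, one_mul, h2]
    abel
  inv_val := by
    have h2 : Matrix.single a b r * Matrix.single a b r = 0 :=
      Matrix.single_mul_single_of_ne (c := r) (d := r) (h := hab.symm) ..
    rw [sub_mul, one_mul, mul_add, mul_one, h2]
    abel

/-- `E_d(A)`: the subgroup generated by the elementary matrices. -/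
def Egrp (d : ℕ) (A : Type*) [CommRing A] : Subgroup (GL (Fin d) A) :=
  Subgroup.closure {g | ∃ (a b : Fin d) (hab : a ≠ b) (r : A), g = elemGL a b hab r}

/-- `E_d(A,H)`: the normal closure in `E_d(A)` of the elementary matrices with
parameter in the ideal `H`. -/
def EgrpRel (d : ℕ) (A : Type*) [CommRing A] (H : Ideal A) : Subgroup (GL (Fin d) A) :=
  Subgroup.closure {g | ∃ e ∈ Egrp d A, ∃ (a b : Fin d) (hab : a ≠ b), ∃ r ∈ H,
    g = e * elemGL a b hab r * e⁻¹}

/-- The generic column ideal used in the definitions of `J_{m,u,v}` and `J̃_{m,u,v}`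
(with 1-indexed `u ∈ {0,…,n}` and `v` a 0-indexed column, so "`v ≤ u`" reads
`v.val < u`).  `lead` is the leading factor (`𝔄̃_u` resp. `𝔄_n`). -/
def colIdeal (n m u : ℕ) (lead : Ideal (LaurentR n)) (v : Fin n) : Ideal (LaurentR n) :=
  lead * ((∑ r : Fin n, if r.val < u then augI n * Ideal.span {sg r * muv r m} else 0)
      + augI n * OI n m + OI n m ^ 2)
    + (if v.val < u then
        ∑ r : Fin n, if u ≤ r.val then Ideal.span {sg r ^ 3 * muv r m} else 0
      else
        (∑ r : Fin n, if u ≤ r.val ∧ r ≠ v then Ideal.span {sg r ^ 3 * muv r m} else 0)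
          + augI n * Ideal.span {sg v ^ 2 * muv v m})

/-- `𝔄̃_u = Σ_{r=u+1}^n σ_rR_n` (1-indexed `u`). -/
def augTil (n u : ℕ) : Ideal (LaurentR n) :=
  Ideal.span {x | ∃ r : Fin n, u ≤ r.val ∧ x = sg r}

/-- The ideal `J̃_{m,u,v}`. -/
def Jtil (n m u : ℕ) (v : Fin n) : Ideal (LaurentR n) := colIdeal n m u (augTil n u) v

/-- The ideal `J_{m,u,v}`. -/
def Jfull (n m u : ℕ) (v : Fin n) : Ideal (LaurentR n) := colIdeal n m u (augI n) v

/-- The determinant condition `det = ∏_r x_r^{s_r·m²}`. -/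
def detMon (n m : ℕ) (g : IAn n) : Prop :=
  ∃ s : Fin n → ℤ,
    (matOf g).det = ∏ r : Fin n, ((Xu r ^ (s r * (m : ℤ) ^ 2) : (LaurentR n)ˣ) : LaurentR n)

/-- The set `𝕁̃_{m,u}`. -/
def JmatTil (n m u : ℕ) : Set (IAn n) :=
  {g | (∀ k v, (matOf g - 1) k v ∈ Jtil n m u v) ∧ detMon n m g}

/-- The set `𝕁_{m,u}`. -/
def JmatFull (n m u : ℕ) : Set (IAn n) :=
  {g | (∀ k v, (matOf g - 1) k v ∈ Jfull n m u v) ∧ detMon n m g}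

/-- The ideal `J_m = Σ_r σ_r³μ_{r,m}R_n + 𝔄_n²·mR_n + 𝔄_n·m²R_n`. -/
def JmI (n m : ℕ) : Ideal (LaurentR n) :=
  Ideal.span (Set.range fun r : Fin n => sg r ^ 3 * muv r m)
    + augI n ^ 2 * OI n m + augI n * OI n (m ^ 2)

/-- The free metabelian group `Φ_n = F_n/F_n''`. -/
instance derivedSeries_normal' (G : Type*) [Group G] (n : ℕ) : (derivedSeries G n).Normal :=
  derivedSeries_normal _ _

def Phi (n : ℕ) : Type := FreeGroup (Fin n) ⧸ derivedSeries (FreeGroup (Fin n)) 2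

instance (n : ℕ) : Group (Phi n) :=
  inferInstanceAs (Group (FreeGroup (Fin n) ⧸ derivedSeries (FreeGroup (Fin n)) 2))

namespace St12

open Finset

variable {n m : ℕ}

/-- standard basis vector -/
def ev {n : ℕ} (u : Fin n) : Fin n → LaurentR n := Pi.single u 1

lemma ev_dot (u : Fin n) (w : Fin n → LaurentR n) : ev u ⬝ᵥ w = w u := by
  simp [ev, single_dotProduct]

lemma dot_ev (u : Fin n) (w : Fin n → LaurentR n) : w ⬝ᵥ ev u = w u := by
  simp [ev, dotProduct_single]

lemma vmv_mul (a b c d : Fin n → LaurentR n) :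
    vecMulVec a b * vecMulVec c d = (b ⬝ᵥ c) • vecMulVec a d := by
  refine Matrix.ext fun p q => ?_
  rw [Matrix.mul_apply, Matrix.smul_apply, dotProduct, smul_eq_mul, Finset.sum_mul]
  apply Finset.sum_congr rfl
  intro k _
  rw [vecMulVec_apply, vecMulVec_apply, vecMulVec_apply]
  ring

lemma vmv_mulVec (a b v : Fin n → LaurentR n) : vecMulVec a b *ᵥ v = (b ⬝ᵥ v) • a := by
  refine funext fun p => ?_
  have h : (vecMulVec a b) p = a p • b := funext fun q => by
    rw [vecMulVec_apply]; rfl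
  show (vecMulVec a b) p ⬝ᵥ v = _
  rw [h, smul_dotProduct, Pi.smul_apply, smul_eq_mul, smul_eq_mul, mul_comm]

lemma vmv_smul_right (a : Fin n → LaurentR n) (r : LaurentR n) (b : Fin n → LaurentR n) :
    vecMulVec a (r • b) = r • vecMulVec a b := by
  refine Matrix.ext fun p q => ?_
  rw [vecMulVec_apply, Matrix.smul_apply, vecMulVec_apply, Pi.smul_apply, smul_eq_mul,
    smul_eq_mul]
  ring

lemma vmv_smul_swap (a : Fin n → LaurentR n) (r : LaurentR n) (b : Fin n → LaurentR n) :
    vecMulVec (r • a) b = vecMulVec a (r • b) := by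
  refine Matrix.ext fun p q => ?_
  rw [vecMulVec_apply, vecMulVec_apply, Pi.smul_apply, Pi.smul_apply, smul_eq_mul,
    smul_eq_mul]
  ring

lemma vmv_add_right (a b c : Fin n → LaurentR n) :
    vecMulVec a (b + c) = vecMulVec a b + vecMulVec a c := by
  refine Matrix.ext fun p q => ?_
  rw [vecMulVec_apply, Matrix.add_apply, vecMulVec_apply, vecMulVec_apply, Pi.add_apply]
  ring

lemma vmv_add_left (a b c : Fin n → LaurentR n) :
    vecMulVec (a + b) c = vecMulVec a c + vecMulVec b c := by
  refine Matrix.ext fun p q => ?_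
  rw [vecMulVec_apply, Matrix.add_apply, vecMulVec_apply, vecMulVec_apply, Pi.add_apply]
  ring

lemma vmv_zero_right (a : Fin n → LaurentR n) : vecMulVec a (0 : Fin n → LaurentR n) = 0 := by
  refine Matrix.ext fun p q => ?_; simp [vecMulVec_apply]

lemma matOf_mul (g h : IAn n) : matOf (g * h) = matOf g * matOf h := rfl

lemma matOf_one : matOf (1 : IAn n) = 1 := rfl

lemma matOf_pow (g : IAn n) (k : ℕ) : matOf (g ^ k) = matOf g ^ k := by
  induction k with
  | zero => simp [pow_zero, matOf_one]
  | succ k ih => rw [pow_succ, pow_succ, matOf_mul, ih]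

lemma matOf_inj : Function.Injective (matOf (n := n)) := fun g h H =>
  Subtype.ext (Units.ext H)

def mkIA (V W : Matrix (Fin n) (Fin n) (LaurentR n)) (h1 : V * W = 1) (h2 : W * V = 1)
    (h3 : V *ᵥ sgVec n = sgVec n) : IAn n := ⟨⟨V, W, h1, h2⟩, h3⟩

lemma matOf_mkIA (V W : Matrix (Fin n) (Fin n) (LaurentR n)) (h1 h2 h3) :
    matOf (mkIA V W h1 h2 h3) = V := rfl

lemma matOf_inv_eq' (g : IAn n) (W : Matrix (Fin n) (Fin n) (LaurentR n))
    (h1 : matOf g * W = 1) : matOf g⁻¹ = W := by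
  have := Units.inv_eq_of_mul_eq_one_right (u := (g : GL (Fin n) (LaurentR n))) h1
  simpa [matOf] using this

lemma mem_IApow_pow (g : IAn n) : g ^ m ∈ IApow n m := Subgroup.subset_closure ⟨g, rfl⟩

lemma conj_mem_IApow {g : IAn n} (hg : g ∈ IApow n m) (k : IAn n) :
    k * g * k⁻¹ ∈ IApow n m := by
  induction hg using Subgroup.closure_induction with
  | mem x hx =>
    obtain ⟨c, rfl⟩ := hx
    rw [← conj_pow]
    exact mem_IApow_pow _
  | one => simpa using (IApow n m).one_mem
  | mul x y hx hy ihx ihy =>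
    have h : k * (x * y) * k⁻¹ = (k * x * k⁻¹) * (k * y * k⁻¹) := by group
    rw [h]; exact mul_mem ihx ihy
  | inv x hx ih =>
    have h : k * x⁻¹ * k⁻¹ = (k * x * k⁻¹)⁻¹ := by group
    rw [h]; exact inv_mem ih

lemma unip_pow (N : Matrix (Fin n) (Fin n) (LaurentR n)) (t : LaurentR n)
    (hN : N * N = (t - 1) • N) (k : ℕ) :
    (1 + N) ^ k = 1 + (∑ a ∈ Finset.range k, t ^ a) • N := by
  induction k with
  | zero => simp
  | succ k ih =>
    rw [pow_succ, ih, geom_sum_succ]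
    have e : (1 + (∑ a ∈ Finset.range k, t ^ a) • N) * (1 + N) =
        1 + N + (∑ a ∈ Finset.range k, t ^ a) • N + (∑ a ∈ Finset.range k, t ^ a) • (N * N) := by
      simp only [mul_add, add_mul, one_mul, mul_one, Matrix.smul_mul]
      abel
    rw [e, hN]
    match_scalars <;> ring

lemma sg_eq (i : Fin n) : sg i = Xv i - 1 := rfl

lemma muv_sg (i : Fin n) (k : ℕ) : 1 + muv i k * sg i = Xv i ^ k := by
  have h := geom_sum_mul (Xv i) k
  rw [muv, sg_eq]
  linear_combination h

def Xinv {n : ℕ} (i : Fin n) : LaurentR n := ((Xu i)⁻¹ : (LaurentR n)ˣ)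

lemma Xinv_mul (i : Fin n) : Xinv i * Xv i = 1 := by
  rw [Xinv, Xv, ← Units.val_mul, inv_mul_cancel, Units.val_one]

lemma Xinv_pow_mul (i : Fin n) (k : ℕ) : Xinv i ^ k * Xv i ^ k = 1 := by
  rw [← mul_pow, Xinv_mul, one_pow]


lemma muv_sg' (i : Fin n) (k : ℕ) : muv i k * sg i = Xv i ^ k - 1 := by
  linear_combination muv_sg i k

lemma expand2 (X Y : Matrix (Fin n) (Fin n) (LaurentR n)) (a b c d : LaurentR n) :
    (a • (1 : Matrix (Fin n) (Fin n) (LaurentR n)) + b • X) * (c • 1 + d • Y) =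
      (a * c) • 1 + (b * c) • X + (a * d) • Y + (b * d) • (X * Y) := by
  simp only [mul_add, add_mul, Matrix.mul_smul, Matrix.smul_mul, smul_smul, mul_one, one_mul]
  match_scalars <;> ring

lemma canon (X : Matrix (Fin n) (Fin n) (LaurentR n)) (c : LaurentR n) :
    1 + c • X = (1 : LaurentR n) • 1 + c • X := by rw [one_smul]

lemma factA (p i : Fin n) (hip : i ≠ p) (v : Fin n → LaurentR n)
    (hvp : v p = 0) (hv : v ⬝ᵥ sgVec n = 0) :
    ∃ g : IAn n, g ∈ IApow n m ∧ matOf g = 1 + vecMulVec (ev p) (muv i m • v) := by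
  have hevs : ∀ q q' : Fin n, q ≠ q' → ev q q' = 0 := by
    intro q q' hqq'; exact Pi.single_eq_of_ne (Ne.symm hqq') 1
  set ρ0 : Fin n → LaurentR n := sg i • ev p - sg p • ev i with hρ0
  have hρ0p : ρ0 ⬝ᵥ ev p = sg i := by
    rw [dot_ev, hρ0]
    simp only [Pi.sub_apply, Pi.smul_apply, smul_eq_mul]
    rw [hevs i p hip, show ev p p = 1 from Pi.single_eq_same p 1]
    ring
  have hρp : (ρ0 + v) ⬝ᵥ ev p = sg i := by
    rw [dot_ev, Pi.add_apply, hvp, ← dot_ev p ρ0, hρ0p, add_zero]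
  have hσ0 : ρ0 ⬝ᵥ sgVec n = 0 := by
    rw [hρ0, sub_dotProduct, smul_dotProduct, smul_dotProduct, ev_dot, ev_dot]
    rw [smul_eq_mul, smul_eq_mul, show sgVec n p = sg p from rfl,
      show sgVec n i = sg i from rfl]
    ring
  have hσN : (ρ0 + v) ⬝ᵥ sgVec n = 0 := by
    rw [add_dotProduct, hσ0, hv, add_zero]
  set N0 := vecMulVec (ev p) ρ0 with hN0
  set N := vecMulVec (ev p) (ρ0 + v) with hN
  have hNN : N * N = sg i • N := by rw [hN, vmv_mul, hρp]
  have hN0N0 : N0 * N0 = sg i • N0 := by rw [hN0, vmv_mul, hρ0p]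
  have hNN0 : N * N0 = sg i • N0 := by
    rw [hN, hN0, vmv_mul]; rw [hρp]
  -- generic unit computation
  have hval : ∀ (X : Matrix (Fin n) (Fin n) (LaurentR n)), X * X = sg i • X →
      (1 + X) * (1 + (-(Xinv i)) • X) = 1 ∧ (1 + (-(Xinv i)) • X) * (1 + X) = 1 := by
    intro X hX
    constructor
    · rw [show (1 : Matrix (Fin n) (Fin n) (LaurentR n)) + X = (1:LaurentR n) • 1 + (1:LaurentR n) • X by simp,
        canon, expand2, hX]
      match_scalars
      · ring
      · linear_combination (-(Xinv i)) * sg_eq i - Xinv_mul i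
    · rw [show (1 : Matrix (Fin n) (Fin n) (LaurentR n)) + X = (1:LaurentR n) • 1 + (1:LaurentR n) • X by simp,
        canon, expand2, hX]
      match_scalars
      · ring
      · linear_combination (-(Xinv i)) * sg_eq i - Xinv_mul i
  have hIA : ∀ (w : Fin n → LaurentR n), w ⬝ᵥ sgVec n = 0 →
      (1 + vecMulVec (ev p) w) *ᵥ sgVec n = sgVec n := by
    intro w hw
    rw [Matrix.add_mulVec, Matrix.one_mulVec, vmv_mulVec, hw, zero_smul, add_zero]
  set g : IAn n := mkIA (1 + N) (1 + (-(Xinv i)) • N) (hval N hNN).1 (hval N hNN).2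
    (hIA _ hσN) with hg
  set g0 : IAn n := mkIA (1 + N0) (1 + (-(Xinv i)) • N0) (hval N0 hN0N0).1 (hval N0 hN0N0).2
    (hIA _ hσ0) with hg0
  have hgm : matOf (g ^ m) = 1 + muv i m • N := by
    rw [matOf_pow, hg, matOf_mkIA, unip_pow N (Xv i) (by rw [hNN, sg_eq]) m, muv]
  have hg0m : matOf (g0 ^ m) = 1 + muv i m • N0 := by
    rw [matOf_pow, hg0, matOf_mkIA, unip_pow N0 (Xv i) (by rw [hN0N0, sg_eq]) m, muv]
  have hginv : matOf ((g0 ^ m)⁻¹) = 1 + (-(Xinv i ^ m * muv i m)) • N0 := by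
    refine matOf_inv_eq' _ _ ?_
    rw [hg0m, canon, canon, expand2, hN0N0]
    match_scalars
    · ring
    · linear_combination (-(Xinv i ^ m * muv i m)) * muv_sg' i m - muv i m * Xinv_pow_mul i m
  refine ⟨g ^ m * (g0 ^ m)⁻¹, mul_mem (mem_IApow_pow g) (inv_mem (mem_IApow_pow g0)), ?_⟩
  rw [matOf_mul, hgm, hginv, canon, canon, expand2, hNN0]
  have hsub : vecMulVec (ev p) (muv i m • v) = muv i m • N - muv i m • N0 := by
    rw [hN, hN0, vmv_add_right, vmv_smul_right]
    match_scalars <;> ring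
  rw [hsub]
  match_scalars
  · ring
  · ring
  · linear_combination (-(Xinv i ^ m * muv i m)) * muv_sg' i m - muv i m * Xinv_pow_mul i m


section CMat

variable (u : Fin n)

lemma hPP : vecMulVec (sgVec n) (ev u) * vecMulVec (sgVec n) (ev u)
    = sg u • vecMulVec (sgVec n) (ev u) := by
  rw [vmv_mul, ev_dot]; rfl

lemma cIA : (Xv u • (1 : Matrix (Fin n) (Fin n) (LaurentR n))
      + (-1 : LaurentR n) • vecMulVec (sgVec n) (ev u)) *ᵥ sgVec n = sgVec n := by
  rw [Matrix.add_mulVec, Matrix.smul_mulVec, Matrix.smul_mulVec,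
    Matrix.one_mulVec, vmv_mulVec, ev_dot]
  refine funext fun q => ?_
  simp only [Pi.add_apply, Pi.smul_apply, smul_eq_mul]
  rw [show sgVec n u = sg u from rfl, sg_eq]
  ring

lemma cUnit :
    (Xv u • (1 : Matrix (Fin n) (Fin n) (LaurentR n))
        + (-1 : LaurentR n) • vecMulVec (sgVec n) (ev u))
      * (Xinv u • 1 + Xinv u • vecMulVec (sgVec n) (ev u)) = 1
    ∧ (Xinv u • (1 : Matrix (Fin n) (Fin n) (LaurentR n))
        + Xinv u • vecMulVec (sgVec n) (ev u))
      * (Xv u • 1 + (-1 : LaurentR n) • vecMulVec (sgVec n) (ev u)) = 1 := by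
  constructor
  · rw [expand2, hPP]
    match_scalars
    · linear_combination Xinv_mul u
    · linear_combination (-(Xinv u)) * sg_eq u
  · rw [expand2, hPP]
    match_scalars
    · linear_combination Xinv_mul u
    · linear_combination (-(Xinv u)) * sg_eq u

def cElt : IAn n :=
  mkIA (Xv u • 1 + (-1 : LaurentR n) • vecMulVec (sgVec n) (ev u))
    (Xinv u • 1 + Xinv u • vecMulVec (sgVec n) (ev u))
    (cUnit u).1 (cUnit u).2 (cIA u)

lemma cPow (k : ℕ) : matOf (cElt u ^ k) =
    Xv u ^ k • 1 + (-(∑ a ∈ Finset.range k, Xv u ^ a)) • vecMulVec (sgVec n) (ev u) := by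
  induction k with
  | zero => simp [matOf_one]
  | succ k ih =>
    rw [pow_succ, matOf_mul, ih, show matOf (cElt u) = Xv u • 1
        + (-1 : LaurentR n) • vecMulVec (sgVec n) (ev u) from rfl, expand2, hPP,
      Finset.sum_range_succ]
    match_scalars
    · ring
    · linear_combination (∑ a ∈ Finset.range k, Xv u ^ a) * sg_eq u

lemma cPowInv : matOf ((cElt u ^ m)⁻¹) =
    Xinv u ^ m • 1 + (Xinv u ^ m * muv u m) • vecMulVec (sgVec n) (ev u) := by
  refine matOf_inv_eq' _ _ ?_
  rw [cPow, ← muv, expand2, hPP]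
  match_scalars
  · linear_combination Xinv_pow_mul u m
  · linear_combination (-(muv u m * Xinv u ^ m)) * muv_sg' u m

end CMat

lemma conjD (u : Fin n) (α : Fin n → LaurentR n) (hαu : α u = 0)
    (hασ : α ⬝ᵥ sgVec n = 0) :
    ∃ D : IAn n, D ∈ IApow n m ∧
      matOf D = 1 + (-(Xinv u ^ m * muv u m)) • vecMulVec (sgVec n) α := by
  set P := vecMulVec (sgVec n) (ev u) with hP
  set M := vecMulVec (ev u) α with hM
  set Q := vecMulVec (sgVec n) α with hQ
  have hMM : M * M = 0 := by rw [hM, vmv_mul, dot_ev, hαu, zero_smul]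
  have hPM : P * M = Q := by
    rw [hP, hM, hQ, vmv_mul, dot_ev, show ev u u = 1 from Pi.single_eq_same u 1, one_smul]
  have hMP : M * P = 0 := by rw [hM, hP, vmv_mul, hασ, zero_smul]
  have hQP : Q * P = 0 := by rw [hQ, hP, vmv_mul, hασ, zero_smul]
  have hQM : Q * M = 0 := by rw [hQ, hM, vmv_mul, dot_ev, hαu, zero_smul]
  have hPQ : P * Q = sg u • Q := by
    rw [hP, hQ, vmv_mul, ev_dot]; rfl
  have hMQ : M * Q = 0 := by rw [hM, hQ, vmv_mul, hασ, zero_smul]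
  have hQQ : Q * Q = 0 := by rw [hQ, vmv_mul, hασ, zero_smul]
  have hAunit : (1 + M) * (1 + (-1 : LaurentR n) • M) = 1
      ∧ (1 + (-1 : LaurentR n) • M) * (1 + M) = 1 := by
    constructor
    · rw [show (1 : Matrix (Fin n) (Fin n) (LaurentR n)) + M
          = (1:LaurentR n) • 1 + (1:LaurentR n) • M by simp, canon, expand2, hMM]
      match_scalars <;> ring
    · rw [show (1 : Matrix (Fin n) (Fin n) (LaurentR n)) + M
          = (1:LaurentR n) • 1 + (1:LaurentR n) • M by simp, canon, expand2, hMM]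
      match_scalars <;> ring
  have hAIA : (1 + M) *ᵥ sgVec n = sgVec n := by
    rw [Matrix.add_mulVec, Matrix.one_mulVec, hM, vmv_mulVec, hασ, zero_smul, add_zero]
  set A : IAn n := mkIA (1 + M) (1 + (-1 : LaurentR n) • M) hAunit.1 hAunit.2 hAIA with hA
  have hAinv : matOf A⁻¹ = 1 + (-1 : LaurentR n) • M := matOf_inv_eq' _ _ hAunit.1
  refine ⟨cElt u ^ m * (A * (cElt u ^ m)⁻¹ * A⁻¹), ?_, ?_⟩
  · refine mul_mem (mem_IApow_pow _) ?_
    have h : A * (cElt u ^ m)⁻¹ * A⁻¹ = (A * (cElt u)⁻¹ * A⁻¹) ^ m := by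
      rw [conj_pow, inv_pow]
    rw [h]
    exact mem_IApow_pow _
  · rw [matOf_mul, matOf_mul, matOf_mul, cPow, cPowInv, hAinv,
      show matOf A = 1 + M from rfl, ← muv]
    rw [show (1 : Matrix (Fin n) (Fin n) (LaurentR n)) + M
        = (1:LaurentR n) • 1 + (1:LaurentR n) • M by simp]
    rw [hP] at hPM hPQ hMP hQP
    simp only [mul_add, add_mul, Matrix.mul_smul, Matrix.smul_mul, smul_smul, mul_one, one_mul,
      hPM, hMP, hQP, hQM, hMM, hPP, hPQ, hMQ, hQQ, mul_zero, zero_mul, smul_zero, add_zero,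
      zero_add]
    match_scalars
    · linear_combination Xinv_pow_mul u m
    · linear_combination (-(Xinv u ^ m * muv u m)) * muv_sg' u m
    · ring
    · linear_combination (Xinv u ^ m * muv u m) * muv_sg' u m


lemma unit_sq_zero {X : Matrix (Fin n) (Fin n) (LaurentR n)} (hX : X * X = 0) :
    (1 + X) * (1 + (-1 : LaurentR n) • X) = 1 := by
  rw [show (1 : Matrix (Fin n) (Fin n) (LaurentR n)) + X
      = (1:LaurentR n) • 1 + (1:LaurentR n) • X by simp, canon, expand2, hX]
  simp only [smul_zero, add_zero]
  match_scalars <;> ring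

lemma unit_sq_zero' {X : Matrix (Fin n) (Fin n) (LaurentR n)} (hX : X * X = 0) :
    (1 + (-1 : LaurentR n) • X) * (1 + X) = 1 := by
  rw [show (1 : Matrix (Fin n) (Fin n) (LaurentR n)) + X
      = (1:LaurentR n) • 1 + (1:LaurentR n) • X by simp, canon, expand2, hX]
  simp only [smul_zero, add_zero]
  match_scalars <;> ring

lemma comm_formula {M N : Matrix (Fin n) (Fin n) (LaurentR n)}
    (hM : M * M = 0) (hN : N * N = 0) (hNM : N * M = 0) :
    (1 + M) * (1 + N) * (1 + (-1 : LaurentR n) • M) * (1 + (-1 : LaurentR n) • N)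
      = 1 + M * N := by
  have e1 : (1 + N) * (1 + (-1 : LaurentR n) • M) = 1 + (-1 : LaurentR n) • M + N := by
    rw [show (1 : Matrix (Fin n) (Fin n) (LaurentR n)) + N
        = (1:LaurentR n) • 1 + (1:LaurentR n) • N by simp, canon, expand2, hNM]
    simp only [smul_zero, add_zero]
    match_scalars <;> ring
  have e2 : (1 + M) * (1 + (-1 : LaurentR n) • M + N) = 1 + N + M * N := by
    rw [mul_add, unit_sq_zero hM, add_mul, one_mul]
    abel
  have e3 : (1 + N + M * N) * (1 + (-1 : LaurentR n) • N) = 1 + M * N := by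
    rw [add_mul, unit_sq_zero hN, mul_add, mul_one, Matrix.mul_smul, mul_assoc, hN, mul_zero,
      smul_zero, add_zero]
  rw [mul_assoc (1 + M) (1 + N) (1 + (-1 : LaurentR n) • M), e1, e2, e3]

lemma Zmul (β a b : Fin n → LaurentR n) (hb : β ⬝ᵥ b = 0) :
    (1 + vecMulVec a β) * (1 + vecMulVec b β) = 1 + vecMulVec (a + b) β := by
  have h : vecMulVec a β * vecMulVec b β = 0 := by rw [vmv_mul, hb, zero_smul]
  simp only [mul_add, add_mul, mul_one, one_mul]
  rw [h, add_zero, vmv_add_left]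
  abel

lemma vmv_zero_left (b : Fin n → LaurentR n) :
    vecMulVec (0 : Fin n → LaurentR n) b = 0 := by
  refine Matrix.ext fun p q => ?_
  rw [vecMulVec_apply]
  simp

lemma dot_sum (β : Fin n → LaurentR n) (s : Finset (Fin n)) (f : Fin n → Fin n → LaurentR n) :
    β ⬝ᵥ (∑ p ∈ s, f p) = ∑ p ∈ s, β ⬝ᵥ f p := by
  classical
  induction s using Finset.induction_on with
  | empty => simp [dotProduct]
  | insert _ _ hp ih =>
    rw [Finset.sum_insert ‹_›, Finset.sum_insert ‹_›, dotProduct_add, ih]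

lemma ZIA (β c : Fin n → LaurentR n) (hβσ : β ⬝ᵥ sgVec n = 0) :
    (1 + vecMulVec c β) *ᵥ sgVec n = sgVec n := by
  rw [Matrix.add_mulVec, Matrix.one_mulVec, vmv_mulVec, hβσ, zero_smul, add_zero]

lemma Zsum (β : Fin n → LaurentR n) (hβσ : β ⬝ᵥ sgVec n = 0) (s : Finset (Fin n))
    (hs : ∀ p ∈ s, β ⬝ᵥ (sg p • ev p) = 0 ∧
      ∃ g ∈ IApow n m, matOf g = 1 + vecMulVec (sg p • ev p) β) :
    ∃ g ∈ IApow n m, matOf g = 1 + vecMulVec (∑ p ∈ s, sg p • ev p) β := by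
  classical
  induction s using Finset.induction_on with
  | empty =>
    exact ⟨1, one_mem _, by rw [matOf_one, Finset.sum_empty, vmv_zero_left, add_zero]⟩
  | @insert p s hp ih =>
    obtain ⟨gs, hgsmem, hgsmat⟩ := ih fun q hq => hs q (Finset.mem_insert_of_mem hq)
    obtain ⟨hdot, gp, hgpmem, hgpmat⟩ := hs p (Finset.mem_insert_self p s)
    refine ⟨gp * gs, mul_mem hgpmem hgsmem, ?_⟩
    have hbs : β ⬝ᵥ (∑ q ∈ s, sg q • ev q) = 0 := by
      rw [dot_sum]
      exact Finset.sum_eq_zero fun q hq => (hs q (Finset.mem_insert_of_mem hq)).1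
    rw [matOf_mul, hgpmat, hgsmat, Zmul β _ _ hbs, Finset.sum_insert hp]

lemma sgVec_sum : ∑ p : Fin n, sg p • ev p = sgVec n := by
  have h : ∀ p : Fin n, sg p • ev p = Pi.single p (sg p) := by
    intro p; funext q
    rw [Pi.smul_apply, smul_eq_mul, ev, Pi.single_apply, Pi.single_apply]
    split_ifs <;> ring
  calc ∑ p : Fin n, sg p • ev p = ∑ p : Fin n, Pi.single p (sg p) := by
        exact Finset.sum_congr rfl fun p _ => h p
    _ = sgVec n := Finset.univ_sum_single _


lemma type2 (u i j : Fin n) (hiu : i ≠ u) (hju : j ≠ u) (hij : i ≠ j) (r : LaurentR n) :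
    ∃ g : IAn n, g ∈ IApow n m ∧ matOf g = 1 + vecMulVec (ev u)
      ((r * (sg u * sg j * muv i m)) • (Pi.single j (sg i) - Pi.single i (sg j))) := by
  have hw0u : (Pi.single j (sg i) - Pi.single i (sg j) : Fin n → LaurentR n) u = 0 := by
    rw [Pi.sub_apply, Pi.single_eq_of_ne (Ne.symm hju), Pi.single_eq_of_ne (Ne.symm hiu),
      sub_zero]
  have hw0σ : (Pi.single j (sg i) - Pi.single i (sg j) : Fin n → LaurentR n) ⬝ᵥ sgVec n
      = 0 := by
    rw [sub_dotProduct, single_dotProduct, single_dotProduct,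
      show sgVec n j = sg j from rfl, show sgVec n i = sg i from rfl]
    ring
  obtain ⟨g, hg, hmat⟩ := factA (m := m) u i hiu
    ((r * sg u * sg j) • (Pi.single j (sg i) - Pi.single i (sg j)))
    (by rw [Pi.smul_apply, hw0u, smul_zero])
    (by rw [smul_dotProduct, hw0σ, smul_zero])
  refine ⟨g, hg, ?_⟩
  rw [hmat]
  have harg : (muv i m • ((r * sg u * sg j) • (Pi.single j (sg i) - Pi.single i (sg j)))
      : Fin n → LaurentR n)
      = (r * (sg u * sg j * muv i m)) • (Pi.single j (sg i) - Pi.single i (sg j)) := by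
    funext q; simp only [Pi.smul_apply, smul_eq_mul]; ring
  rw [harg]

lemma type1 (hn : 4 ≤ n) (u i j : Fin n) (hiu : i ≠ u) (hju : j ≠ u) (hij : i ≠ j)
    (r : LaurentR n) :
    ∃ g : IAn n, g ∈ IApow n m ∧ matOf g = 1 + vecMulVec (ev u)
      ((r * (sg u ^ 2 * muv u m)) • (Pi.single j (sg i) - Pi.single i (sg j))) := by
  classical
  -- choose a fourth index b
  obtain ⟨b, hbmem⟩ : ∃ b : Fin n, b ∉ ({u, i, j} : Finset (Fin n)) := by
    by_contra hcon
    push_neg at hcon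
    have hsub : (Finset.univ : Finset (Fin n)) ⊆ {u, i, j} := fun x _ => hcon x
    have hcard := Finset.card_le_card hsub
    rw [Finset.card_univ, Fintype.card_fin] at hcard
    have h1 : ({u, i, j} : Finset (Fin n)).card ≤ 3 := by
      refine le_trans (Finset.card_insert_le _ _) ?_
      refine Nat.succ_le_succ ?_
      refine le_trans (Finset.card_insert_le _ _) ?_
      exact Nat.succ_le_succ (Finset.card_singleton _).le
    omega
  rw [Finset.mem_insert, Finset.mem_insert, Finset.mem_singleton] at hbmem
  push_neg at hbmem
  obtain ⟨hbu, hbi, hbj⟩ := hbmem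
  set w0 : Fin n → LaurentR n := Pi.single j (sg i) - Pi.single i (sg j) with hw0
  have hw0q : ∀ q, q ≠ i → q ≠ j → w0 q = 0 := by
    intro q hqi hqj
    rw [hw0, Pi.sub_apply, Pi.single_eq_of_ne hqj, Pi.single_eq_of_ne hqi, sub_zero]
  have hw0u : w0 u = 0 := hw0q u (Ne.symm hiu) (Ne.symm hju)
  have hw0b : w0 b = 0 := hw0q b hbi hbj
  have hw0i : w0 i = -(sg j) := by
    rw [hw0, Pi.sub_apply, Pi.single_eq_of_ne hij, Pi.single_eq_same, zero_sub]
  have hw0j : w0 j = sg i := by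
    rw [hw0, Pi.sub_apply, Pi.single_eq_same, Pi.single_eq_of_ne (Ne.symm hij), sub_zero]
  have hw0σ : w0 ⬝ᵥ sgVec n = 0 := by
    rw [hw0, sub_dotProduct, single_dotProduct, single_dotProduct,
      show sgVec n j = sg j from rfl, show sgVec n i = sg i from rfl]
    ring
  set β : Fin n → LaurentR n := (r * sg u * muv u m) • w0 with hβ
  have hβq : ∀ q, q ≠ i → q ≠ j → β q = 0 := by
    intro q h1 h2
    rw [hβ, Pi.smul_apply, hw0q q h1 h2, smul_zero]
  have hβσ : β ⬝ᵥ sgVec n = 0 := by rw [hβ, smul_dotProduct, hw0σ, smul_zero]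
  -- the element D with matrix 1 + σ⃗βᵀ
  obtain ⟨D, hDmem, hDmat⟩ := conjD (m := m) u ((-(r * Xv u ^ m * sg u)) • w0)
    (by rw [Pi.smul_apply, hw0u, smul_zero])
    (by rw [smul_dotProduct, hw0σ, smul_zero])
  have hDmat' : matOf D = 1 + vecMulVec (sgVec n) β := by
    rw [hDmat, hβ, vmv_smul_right, vmv_smul_right, smul_smul]
    match_scalars
    · ring
    · linear_combination (r * sg u * muv u m) * Xinv_pow_mul u m
  -- the element Y with matrix 1 + κβᵀ
  set κ : Fin n → LaurentR n := sg i • ev i + sg j • ev j with hκ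
  set η : Fin n → LaurentR n := sg u • ev b + (-(sg b)) • ev u with hη
  have hev1 : ∀ q : Fin n, ev q q = (1 : LaurentR n) := fun q => Pi.single_eq_same q 1
  have hev0 : ∀ q q' : Fin n, q ≠ q' → ev q q' = 0 := fun q q' h =>
    Pi.single_eq_of_ne (Ne.symm h) 1
  have hκq : ∀ q, q ≠ i → q ≠ j → κ q = 0 := by
    intro q h1 h2
    rw [hκ, Pi.add_apply, Pi.smul_apply, Pi.smul_apply, hev0 i q (Ne.symm h1),
      hev0 j q (Ne.symm h2), smul_zero, smul_zero, add_zero]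
  have hηκ : η ⬝ᵥ κ = 0 := by
    rw [hη, add_dotProduct, smul_dotProduct, smul_dotProduct, ev_dot, ev_dot,
      hκq b hbi hbj, hκq u (Ne.symm hiu) (Ne.symm hju), smul_zero, smul_zero, add_zero]
  have hησ : η ⬝ᵥ sgVec n = 0 := by
    rw [hη, add_dotProduct, smul_dotProduct, smul_dotProduct, ev_dot, ev_dot,
      show sgVec n b = sg b from rfl, show sgVec n u = sg u from rfl, smul_eq_mul,
      smul_eq_mul]
    ring
  set Mk := vecMulVec κ η with hMk
  have hMkMk : Mk * Mk = 0 := by rw [hMk, vmv_mul, hηκ, zero_smul]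
  set A : IAn n := mkIA (1 + Mk) (1 + (-1 : LaurentR n) • Mk) (unit_sq_zero hMkMk)
    (unit_sq_zero' hMkMk) (by
      rw [Matrix.add_mulVec, Matrix.one_mulVec, hMk, vmv_mulVec, hησ, zero_smul, add_zero])
    with hA
  obtain ⟨gB, hgBmem, hgBmat⟩ := factA (m := m) b u (Ne.symm hbu) (r • w0)
    (by rw [Pi.smul_apply, hw0b, smul_zero])
    (by rw [smul_dotProduct, hw0σ, smul_zero])
  set γ : Fin n → LaurentR n := muv u m • (r • w0) with hγ
  set Nk := vecMulVec (ev b) γ with hNk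
  have hγb : γ b = 0 := by rw [hγ, Pi.smul_apply, Pi.smul_apply, hw0b, smul_zero, smul_zero]
  have hγκ : γ ⬝ᵥ κ = 0 := by
    rw [hγ, smul_dotProduct, smul_dotProduct, hκ, dotProduct_add, dotProduct_smul,
      dotProduct_smul, dot_ev, dot_ev, hw0i, hw0j, smul_eq_mul, smul_eq_mul, smul_eq_mul,
      smul_eq_mul]
    ring
  have hNkNk : Nk * Nk = 0 := by rw [hNk, vmv_mul, dot_ev, hγb, zero_smul]
  have hNkMk : Nk * Mk = 0 := by rw [hNk, hMk, vmv_mul, hγκ, zero_smul]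
  have hMkNk : Mk * Nk = vecMulVec κ β := by
    rw [hMk, hNk, vmv_mul, dot_ev]
    have hηb : η b = sg u := by
      rw [hη, Pi.add_apply, Pi.smul_apply, Pi.smul_apply, hev1 b, hev0 u b (Ne.symm hbu),
        smul_eq_mul, smul_eq_mul, mul_one, mul_zero, add_zero]
    rw [hηb, ← vmv_smul_right]
    have harg : (sg u • γ : Fin n → LaurentR n) = β := by
      rw [hγ, hβ]; funext q; simp only [Pi.smul_apply, smul_eq_mul]; ring
    rw [harg]
  have hAinv : matOf A⁻¹ = 1 + (-1 : LaurentR n) • Mk := matOf_inv_eq' _ _ (unit_sq_zero hMkMk)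
  have hgBinv : matOf gB⁻¹ = 1 + (-1 : LaurentR n) • Nk := by
    refine matOf_inv_eq' _ _ ?_
    rw [hgBmat]
    exact unit_sq_zero hNkNk
  set Y : IAn n := A * gB * A⁻¹ * gB⁻¹ with hY
  have hYmem : Y ∈ IApow n m := by
    rw [hY, show A * gB * A⁻¹ * gB⁻¹ = (A * gB * A⁻¹) * gB⁻¹ from rfl]
    exact mul_mem (conj_mem_IApow hgBmem A) (inv_mem hgBmem)
  have hYmat : matOf Y = 1 + vecMulVec κ β := by
    rw [hY, matOf_mul, matOf_mul, matOf_mul, hAinv, hgBinv, hgBmat,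
      show matOf A = 1 + Mk from rfl, comm_formula hMkMk hNkNk hNkMk, hMkNk]
  -- the element T (target)
  have hβu : β u = 0 := hβq u (Ne.symm hiu) (Ne.symm hju)
  have hβcu : β ⬝ᵥ (sg u • ev u) = 0 := by
    rw [dotProduct_smul, dot_ev, hβu, smul_zero]
  have hTsq : vecMulVec (sg u • ev u) β * vecMulVec (sg u • ev u) β = 0 := by
    rw [vmv_mul, hβcu, zero_smul]
  set T : IAn n := mkIA (1 + vecMulVec (sg u • ev u) β)
    (1 + (-1 : LaurentR n) • vecMulVec (sg u • ev u) β) (unit_sq_zero hTsq)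
    (unit_sq_zero' hTsq) (ZIA β _ hβσ) with hT
  -- the middle element Zs
  set s : Finset (Fin n) := Finset.univ \ {i, j, u} with hs
  obtain ⟨Zs, hZsmem, hZsmat⟩ := Zsum (m := m) β hβσ s (by
    intro p hp
    rw [hs, Finset.mem_sdiff, Finset.mem_insert, Finset.mem_insert, Finset.mem_singleton] at hp
    push_neg at hp
    obtain ⟨-, hpi, hpj, hpu⟩ := hp
    have hβp : β ⬝ᵥ (sg p • ev p) = 0 := by
      rw [dotProduct_smul, dot_ev, hβq p hpi hpj, smul_zero]
    refine ⟨hβp, ?_⟩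
    obtain ⟨gp, hgpmem, hgpmat⟩ := factA (m := m) p u (Ne.symm hpu)
      ((r * sg u * sg p) • w0)
      (by rw [Pi.smul_apply, hw0q p hpi hpj, smul_zero])
      (by rw [smul_dotProduct, hw0σ, smul_zero])
    refine ⟨gp, hgpmem, ?_⟩
    rw [hgpmat, vmv_smul_swap]
    have harg : (sg p • β : Fin n → LaurentR n) = muv u m • ((r * sg u * sg p) • w0) := by
      rw [hβ]; funext q; simp only [Pi.smul_apply, smul_eq_mul]; ring
    rw [harg])
  -- assembling
  have hβs : β ⬝ᵥ (∑ p ∈ s, sg p • ev p) = 0 := by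
    rw [dot_sum]
    refine Finset.sum_eq_zero fun p hp => ?_
    rw [hs, Finset.mem_sdiff, Finset.mem_insert, Finset.mem_insert, Finset.mem_singleton] at hp
    push_neg at hp
    rw [dotProduct_smul, dot_ev, hβq p hp.2.1 hp.2.2.1, smul_zero]
  have hsplit : κ + ((∑ p ∈ s, sg p • ev p) + sg u • ev u) = sgVec n := by
    have h1 : ∑ p ∈ s, sg p • ev p + ∑ p ∈ ({i, j, u} : Finset (Fin n)), sg p • ev p
        = ∑ p : Fin n, sg p • ev p := Finset.sum_sdiff (Finset.subset_univ _)
    have h2 : ∑ p ∈ ({i, j, u} : Finset (Fin n)), sg p • ev p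
        = sg i • ev i + (sg j • ev j + sg u • ev u) := by
      rw [Finset.sum_insert (by simp [hij, hiu]), Finset.sum_insert (by simp [hju]),
        Finset.sum_singleton]
    rw [← sgVec_sum, ← h1, h2, hκ]
    abel
  have hprod : Y * Zs * T = D := by
    apply matOf_inj
    rw [matOf_mul, matOf_mul, hYmat, hZsmat, show matOf T = 1 + vecMulVec (sg u • ev u) β
        from rfl, Zmul β _ _ hβs, Zmul β _ _ hβcu, hDmat', ← hsplit]
    rw [add_assoc]
  have hTeq : T = (Y * Zs)⁻¹ * D := by
    rw [← hprod]
    group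
  refine ⟨T, ?_, ?_⟩
  · rw [hTeq]
    exact mul_mem (inv_mem (mul_mem hYmem hZsmem)) hDmem
  · rw [show matOf T = 1 + vecMulVec (sg u • ev u) β from rfl, vmv_smul_swap]
    have harg : (sg u • β : Fin n → LaurentR n)
        = (r * (sg u ^ 2 * muv u m)) • w0 := by
      rw [hβ]; funext q; simp only [Pi.smul_apply, smul_eq_mul]; ring
    rw [harg, hw0]


lemma w0_at_u (u i j : Fin n) (hiu : i ≠ u) (hju : j ≠ u) :
    (Pi.single j (sg i) - Pi.single i (sg j) : Fin n → LaurentR n) u = 0 := by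
  rw [Pi.sub_apply, Pi.single_eq_of_ne (Ne.symm hju), Pi.single_eq_of_ne (Ne.symm hiu),
    sub_zero]

lemma w0_dot (i j : Fin n) :
    (Pi.single j (sg i) - Pi.single i (sg j) : Fin n → LaurentR n) ⬝ᵥ sgVec n = 0 := by
  rw [sub_dotProduct, single_dotProduct, single_dotProduct,
    show sgVec n j = sg j from rfl, show sgVec n i = sg i from rfl]
  ring

def GoodRow (u : Fin n) (m : ℕ) (a : Fin n → LaurentR n) : Prop :=
  a u = 0 ∧ a ⬝ᵥ sgVec n = 0 ∧
    ∃ g : IAn n, g ∈ IApow n m ∧ matOf g = 1 + vecMulVec (ev u) a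

lemma GoodRow_zero (u : Fin n) : GoodRow u m 0 :=
  ⟨rfl, zero_dotProduct _, 1, one_mem _, by rw [matOf_one, vmv_zero_right, add_zero]⟩

lemma GoodRow_add (u : Fin n) {a b : Fin n → LaurentR n}
    (ha : GoodRow u m a) (hb : GoodRow u m b) : GoodRow u m (a + b) := by
  obtain ⟨hau, haσ, g1, hg1, hm1⟩ := ha
  obtain ⟨hbu, hbσ, g2, hg2, hm2⟩ := hb
  refine ⟨by rw [Pi.add_apply, hau, hbu, add_zero],
    by rw [add_dotProduct, haσ, hbσ, add_zero], g1 * g2, mul_mem hg1 hg2, ?_⟩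
  rw [matOf_mul, hm1, hm2]
  have h : vecMulVec (ev u) a * vecMulVec (ev u) b = 0 := by
    rw [vmv_mul, dot_ev, hau, zero_smul]
  simp only [mul_add, add_mul, mul_one, one_mul]
  rw [h, add_zero, vmv_add_right]
  abel

end St12

/-- (Elementary elements of type 1, second family.)  For `n ≥ 4`, `u`,
`m ≥ 1`, if the row vector `a` (with `a_u = 0`) is an `R_n`-linear combination of the vectors
`σ_u²μ_{u,m}(σ_ie_j − σ_je_i)` and `σ_uσ_jμ_{i,m}(σ_ie_j − σ_je_i)` (`i,j ≠ u`, `i ≠ j`),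
then the matrix equal to the identity except for the row `a` in the `u`-th row lies
in `IA_n^m`. -/
theorem statement_12 (n m : ℕ) (hn : 4 ≤ n) (hm : 1 ≤ m) (u : Fin n)
    (a : Fin n → LaurentR n) (hau : a u = 0)
    (ha : a ∈ Submodule.span (LaurentR n)
      ({v : Fin n → LaurentR n | ∃ i j : Fin n, i ≠ u ∧ j ≠ u ∧ i ≠ j ∧
          v = (sg u ^ 2 * muv u m) • (Pi.single j (sg i) - Pi.single i (sg j))} ∪
       {v : Fin n → LaurentR n | ∃ i j : Fin n, i ≠ u ∧ j ≠ u ∧ i ≠ j ∧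
          v = (sg u * sg j * muv i m) • (Pi.single j (sg i) - Pi.single i (sg j))})) :
    ∃ g : IAn n, g ∈ IApow n m ∧
      matOf g = 1 + Matrix.of (fun p q : Fin n => if p = u then a q else 0) := by
  have H : ∀ r : LaurentR n, St12.GoodRow u m (r • a) := by
    refine Submodule.span_induction
      (p := fun x _ => ∀ r : LaurentR n, St12.GoodRow u m (r • x)) ?_ ?_ ?_ ?_ ha
    · intro x hx r
      rcases hx with hx | hx
      · obtain ⟨i, j, hiu, hju, hij, rfl⟩ := hx
        obtain ⟨g, hg, hmat⟩ := St12.type1 (m := m) hn u i j hiu hju hij r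
        refine ⟨?_, ?_, g, hg, ?_⟩
        · rw [Pi.smul_apply, Pi.smul_apply, St12.w0_at_u u i j hiu hju, smul_zero, smul_zero]
        · rw [smul_dotProduct, smul_dotProduct, St12.w0_dot i j, smul_zero, smul_zero]
        · rw [hmat, smul_smul]
      · obtain ⟨i, j, hiu, hju, hij, rfl⟩ := hx
        obtain ⟨g, hg, hmat⟩ := St12.type2 (m := m) u i j hiu hju hij r
        refine ⟨?_, ?_, g, hg, ?_⟩
        · rw [Pi.smul_apply, Pi.smul_apply, St12.w0_at_u u i j hiu hju, smul_zero, smul_zero]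
        · rw [smul_dotProduct, smul_dotProduct, St12.w0_dot i j, smul_zero, smul_zero]
        · rw [hmat, smul_smul]
    · intro r
      rw [smul_zero]
      exact St12.GoodRow_zero u
    · intro x y hx hy ihx ihy r
      rw [smul_add]
      exact St12.GoodRow_add u (ihx r) (ihy r)
    · intro c x hx ih r
      rw [smul_smul]
      exact ih (r * c)
  have H1 := H 1
  rw [one_smul] at H1
  obtain ⟨-, -, g, hg, hmat⟩ := H1
  refine ⟨g, hg, ?_⟩
  rw [hmat]
  congr 1
  refine Matrix.ext fun p q => ?_
  rw [vecMulVec_apply, Matrix.of_apply,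
    show St12.ev u p = if p = u then 1 else 0 from Pi.single_apply u 1 p]
  split_ifs <;> ring
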